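/- Every connected threshold graph on at least 2 vertices is isomorphic to NSG(m_1,…,m_h; n_1,…,n_h) for some positive integer h and some positive integers m_1,…,m_h, n_1,…,n_h. -/

import Mathlib

/-- A graph is a threshold graph if adjacency is determined by vertex weights
exceeding a threshold. -/
def SimpleGraph.IsThreshold {V : Type*} (G : SimpleGraph V) : Prop :=
  ∃ (S : ℝ) (w : V → ℝ), ∀ u v : V, u ≠ v → (G.Adj u v ↔ S < w u + w v)

/-- The nested split graph `NSG(m₁,…,m_h; n₁,…,n_h)`: the vertex set is the disjoint union
of `U₁,…,U_h, V₁,…,V_h` with `|Uᵢ| = mᵢ`, `|Vᵢ| = nᵢ`; the `Vᵢ`'s form a clique,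
the `Uᵢ`'s form an independent set, and a vertex of `Uᵢ` is adjacent to a vertex of `Vⱼ`
iff `j ≤ i`. -/
def NSG (h : ℕ) (m n : Fin h → ℕ) :
    SimpleGraph ((Σ i : Fin h, Fin (m i)) ⊕ (Σ i : Fin h, Fin (n i))) where
  Adj x y :=
    match x, y with
    | Sum.inl _, Sum.inl _ => False
    | Sum.inl ⟨i, _⟩, Sum.inr ⟨j, _⟩ => j ≤ i
    | Sum.inr ⟨j, _⟩, Sum.inl ⟨i, _⟩ => j ≤ i
    | Sum.inr a, Sum.inr b => a ≠ b
  symm := by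
    refine ⟨?_⟩
    rintro (⟨i, a⟩ | ⟨i, a⟩) (⟨j, b⟩ | ⟨j, b⟩) hadj
    · exact hadj
    · exact hadj
    · exact hadj
    · exact Ne.symm hadj
  loopless := by
    refine ⟨?_⟩
    rintro (⟨i, a⟩ | ⟨i, a⟩) hadj
    · exact hadj
    · exact hadj rfl

set_option linter.unusedSectionVars false
section TGAux

open Classical in
noncomputable def TGminNbr {V : Type*} [Fintype V] [LinearOrder V] (G : SimpleGraph V) (v : V) : V :=
  if h : (Finset.univ.filter fun u => G.Adj u v).Nonempty then
    (Finset.univ.filter fun u => G.Adj u v).min' h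
  else v

open Classical in
noncomputable def TGTset {V : Type*} [Fintype V] [LinearOrder V] (G : SimpleGraph V) : Finset V :=
  (Finset.univ.filter fun v => ¬ v < TGminNbr G v).image (TGminNbr G)

open Classical in
noncomputable def TGfUval {V : Type*} [Fintype V] [LinearOrder V] (G : SimpleGraph V) (u : V) : V :=
  if hn : ((TGTset G).filter (· ≤ u)).Nonempty then ((TGTset G).filter (· ≤ u)).max' hn else u

variable {V : Type*} [Fintype V] [LinearOrder V] {G : SimpleGraph V}

lemma TGadj_minNbr (hN : ∀ v, ∃ u, G.Adj u v) (v : V) : G.Adj (TGminNbr G v) v := by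
  classical
  obtain ⟨u, hu⟩ := hN v
  have hne : (Finset.univ.filter fun u => G.Adj u v).Nonempty := ⟨u, by simp [hu]⟩
  rw [TGminNbr, dif_pos hne]
  simpa using Finset.min'_mem _ hne

lemma TGminNbr_le {u v : V} (h : G.Adj u v) : TGminNbr G v ≤ u := by
  classical
  have hne : (Finset.univ.filter fun u => G.Adj u v).Nonempty := ⟨u, by simp [h]⟩
  rw [TGminNbr, dif_pos hne]
  exact Finset.min'_le _ _ (by simp [h])

lemma TGfUval_self {u : V} (hu : u ∈ TGTset G) : TGfUval G u = u := by
  classical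
  have hn : ((TGTset G).filter (· ≤ u)).Nonempty := ⟨u, Finset.mem_filter.mpr ⟨hu, le_rfl⟩⟩
  rw [TGfUval, dif_pos hn]
  exact le_antisymm ((Finset.mem_filter.mp (Finset.max'_mem _ hn)).2)
    (Finset.le_max' ((TGTset G).filter (· ≤ u)) u (Finset.mem_filter.mpr ⟨hu, le_rfl⟩))

variable (hN : ∀ v, ∃ u, G.Adj u v)
variable (hmono : ∀ ⦃u u' v : V⦄, u ≤ u' → u' ≠ v → G.Adj u v → G.Adj u' v)

include hN hmono in
lemma TGadj_iff {u v : V} : G.Adj u v ↔ TGminNbr G v ≤ u ∧ u ≠ v :=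
  ⟨fun h => ⟨TGminNbr_le h, h.ne⟩, fun ⟨h1, h2⟩ => hmono h1 h2 (TGadj_minNbr hN v)⟩

include hN in
lemma TGminNbr_ne (v : V) : TGminNbr G v ≠ v := (TGadj_minNbr hN v).ne

include hmono in
lemma TGmono2 {k i j : V} (h : G.Adj k i) (hij : i ≤ j) (hkj : k ≠ j) : G.Adj k j :=
  (hmono hij (Ne.symm hkj) h.symm).symm

include hN hmono in
lemma TGminNbr_antitone {i j : V} (hij : i ≤ j) : TGminNbr G j ≤ TGminNbr G i := by
  have hk := TGadj_minNbr hN i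
  by_cases hkj : TGminNbr G i = j
  · have : G.Adj i j := hkj ▸ hk.symm
    calc TGminNbr G j ≤ i := TGminNbr_le this
    _ ≤ j := hij
    _ = TGminNbr G i := hkj.symm
  · exact TGminNbr_le (TGmono2 hmono hk hij hkj)

include hN hmono in
lemma TGindep {u v : V} (hu : u < TGminNbr G u) (hv : v < TGminNbr G v) : ¬ G.Adj u v := by
  intro h
  have h1 : TGminNbr G v ≤ u := TGminNbr_le h
  have h2 : TGminNbr G u ≤ v := TGminNbr_le h.symm
  exact absurd (hu.trans_le h2) (not_lt.mpr (hv.trans_le h1).le)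

include hN hmono in
lemma TGclique {u v : V} (hu : ¬ u < TGminNbr G u) (hv : ¬ v < TGminNbr G v) (huv : u ≠ v) :
    G.Adj u v := by
  have key : ∀ a b : V, ¬ a < TGminNbr G a → a < b → G.Adj a b := by
    intro a b ha hab
    have hka : TGminNbr G a ≤ a := le_of_not_gt ha
    have h1 : G.Adj (TGminNbr G a) b :=
      TGmono2 hmono (TGadj_minNbr hN a) hab.le (ne_of_lt (lt_of_le_of_lt hka hab))
    exact hmono hka hab.ne h1
  rcases huv.lt_or_gt with h | h
  · exact key u v hu h
  · exact (key v u hv h).symm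

include hN hmono in
lemma TGminNbr_mem_I {v : V} (hv : ¬ v < TGminNbr G v) :
    TGminNbr G v < TGminNbr G (TGminNbr G v) := by
  by_contra hIc
  set i := TGminNbr G v with hi
  have hki : TGminNbr G i ≤ i := le_of_not_gt hIc
  have hki' : TGminNbr G i < i := lt_of_le_of_ne hki (TGminNbr_ne hN i)
  have hiv : i < v := lt_of_le_of_ne (le_of_not_gt hv) (TGminNbr_ne hN v)
  have h1 : G.Adj (TGminNbr G i) v :=
    TGmono2 hmono (TGadj_minNbr hN i) hiv.le (ne_of_lt (hki'.trans hiv))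
  exact absurd (TGminNbr_le h1) (not_le.mpr hki')

include hN hmono in
lemma TGminNbr_mem_C {u : V} (hu : u < TGminNbr G u) :
    ¬ TGminNbr G u < TGminNbr G (TGminNbr G u) := by
  intro h
  exact TGindep hN hmono h hu (TGadj_minNbr hN u)

lemma TGmem_Tset {x : V} (hx : x ∈ TGTset G) :
    ∃ v, ¬ v < TGminNbr G v ∧ TGminNbr G v = x := by
  classical
  rw [TGTset, Finset.mem_image] at hx
  obtain ⟨v, hv, hveq⟩ := hx
  exact ⟨v, (Finset.mem_filter.mp hv).2, hveq⟩

include hN hmono in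
lemma TGTset_subset_I {x : V} (hx : x ∈ TGTset G) : x < TGminNbr G x := by
  classical
  rw [TGTset, Finset.mem_image] at hx
  obtain ⟨v, hv, rfl⟩ := hx
  rw [Finset.mem_filter] at hv
  exact TGminNbr_mem_I hN hmono hv.2

include hN hmono in
lemma TGbot_mem_Tset (hne : (Finset.univ : Finset V).Nonempty) (hcard : 1 < Fintype.card V) :
    Finset.univ.min' hne ∈ TGTset G := by
  classical
  set bot := Finset.univ.min' hne with hbot
  set top := Finset.univ.max' hne with htop
  have hbt : bot < top := Finset.min'_lt_max'_of_card _ (by simpa using hcard)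
  have hadj : G.Adj bot top := by
    obtain ⟨u, hu⟩ := hN bot
    exact (hmono (Finset.le_max' _ u (Finset.mem_univ u)) hbt.ne' hu).symm
  have h1 : TGminNbr G top = bot :=
    le_antisymm (TGminNbr_le hadj) (Finset.min'_le _ _ (Finset.mem_univ _))
  have h2 : ¬ top < TGminNbr G top := by
    rw [h1]; exact not_lt.mpr hbt.le
  rw [TGTset, Finset.mem_image]
  exact ⟨top, Finset.mem_filter.mpr ⟨Finset.mem_univ _, h2⟩, h1⟩

include hN hmono in
lemma TGfUval_spec (hne : (Finset.univ : Finset V).Nonempty) (hcard : 1 < Fintype.card V) (u : V) :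
    TGfUval G u ∈ TGTset G ∧ TGfUval G u ≤ u ∧ ∀ x ∈ TGTset G, x ≤ u → x ≤ TGfUval G u := by
  classical
  have hbot := TGbot_mem_Tset hN hmono hne hcard
  have hn : ((TGTset G).filter (· ≤ u)).Nonempty :=
    ⟨_, Finset.mem_filter.mpr ⟨hbot, Finset.min'_le _ _ (Finset.mem_univ _)⟩⟩
  rw [TGfUval, dif_pos hn]
  refine ⟨?_, ?_, ?_⟩
  · exact (Finset.mem_filter.mp (Finset.max'_mem _ hn)).1
  · exact (Finset.mem_filter.mp (Finset.max'_mem _ hn)).2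
  · intro x hx hxu
    exact Finset.le_max' ((TGTset G).filter (· ≤ u)) x (Finset.mem_filter.mpr ⟨hx, hxu⟩)

end TGAux

lemma TGmain {V : Type*} [Fintype V] [LinearOrder V] (G : SimpleGraph V)
    (hcard : 1 < Fintype.card V)
    (hN : ∀ v, ∃ u, G.Adj u v)
    (hmono : ∀ ⦃u u' v : V⦄, u ≤ u' → u' ≠ v → G.Adj u v → G.Adj u' v) :
    ∃ (h : ℕ) (m n : Fin h → ℕ), 1 ≤ h ∧ (∀ i, 1 ≤ m i) ∧ (∀ i, 1 ≤ n i) ∧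
      Nonempty (G ≃g NSG h m n) := by
  classical
  haveI : Nonempty V := Fintype.card_pos_iff.mp (by omega)
  have hne : (Finset.univ : Finset V).Nonempty := Finset.univ_nonempty
  have hTne : (TGTset G).Nonempty := ⟨_, TGbot_mem_Tset hN hmono hne hcard⟩
  have hpos : 1 ≤ (TGTset G).card := Finset.card_pos.mpr hTne
  let a : Fin (TGTset G).card ≃o {x // x ∈ TGTset G} := (TGTset G).orderIsoOfFin rfl
  have hfUmem : ∀ u : V, TGfUval G u ∈ TGTset G :=
    fun u => (TGfUval_spec hN hmono hne hcard u).1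
  have hfVmem : ∀ v : V, ¬ v < TGminNbr G v → TGminNbr G v ∈ TGTset G := fun v hv => by
    rw [TGTset, Finset.mem_image]
    exact ⟨v, Finset.mem_filter.mpr ⟨Finset.mem_univ _, hv⟩, rfl⟩
  let fU : {v : V // v < TGminNbr G v} → Fin (TGTset G).card :=
    fun u => a.symm ⟨TGfUval G u.1, hfUmem u.1⟩
  let fV : {v : V // ¬ v < TGminNbr G v} → Fin (TGTset G).card :=
    fun v => a.symm ⟨TGminNbr G v.1, hfVmem v.1 v.2⟩
  let m : Fin (TGTset G).card → ℕ := fun i => Nat.card {u // fU u = i}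
  let n : Fin (TGTset G).card → ℕ := fun i => Nat.card {v // fV v = i}
  have hm : ∀ i, 1 ≤ m i := by
    intro i
    have hI : (a i).1 < TGminNbr G (a i).1 := TGTset_subset_I hN hmono (a i).2
    have hfUi : fU ⟨(a i).1, hI⟩ = i := by
      show a.symm _ = i
      rw [show (⟨TGfUval G (a i).1, hfUmem (a i).1⟩ : {x // x ∈ TGTset G}) = a i from
        Subtype.ext (TGfUval_self (a i).2)]
      exact a.symm_apply_apply i
    haveI : Nonempty {u // fU u = i} := ⟨⟨⟨(a i).1, hI⟩, hfUi⟩⟩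
    exact Nat.card_pos
  have hn : ∀ i, 1 ≤ n i := by
    intro i
    obtain ⟨v, hv, hveq⟩ := TGmem_Tset (a i).2
    have hfVi : fV ⟨v, hv⟩ = i := by
      show a.symm _ = i
      rw [show (⟨TGminNbr G v, hfVmem v hv⟩ : {x // x ∈ TGTset G}) = a i from Subtype.ext hveq]
      exact a.symm_apply_apply i
    haveI : Nonempty {u // fV u = i} := ⟨⟨⟨v, hv⟩, hfVi⟩⟩
    exact Nat.card_pos
  -- the equivalence
  let eU : {v : V // v < TGminNbr G v} ≃ Σ i, Fin (m i) :=
    (Equiv.sigmaFiberEquiv fU).symm.trans (Equiv.sigmaCongrRight fun i => Finite.equivFin _)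
  let eC : {v : V // ¬ v < TGminNbr G v} ≃ Σ i, Fin (n i) :=
    (Equiv.sigmaFiberEquiv fV).symm.trans (Equiv.sigmaCongrRight fun i => Finite.equivFin _)
  let e : V ≃ (Σ i, Fin (m i)) ⊕ (Σ i, Fin (n i)) :=
    (Equiv.sumCompl (fun v => v < TGminNbr G v)).symm.trans (Equiv.sumCongr eU eC)
  have heU : ∀ (v : V) (h : v < TGminNbr G v), ∃ k, e v = Sum.inl ⟨fU ⟨v, h⟩, k⟩ := by
    intro v h
    refine ⟨(Finite.equivFin {x // fU x = fU ⟨v, h⟩}) ⟨⟨v, h⟩, rfl⟩, ?_⟩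
    show (Equiv.sumCongr eU eC) ((Equiv.sumCompl (fun v => v < TGminNbr G v)).symm v) = _
    rw [Equiv.sumCompl_symm_apply_of_pos (p := fun v => v < TGminNbr G v) (a := v) h]
    rfl
  have heC : ∀ (v : V) (h : ¬ v < TGminNbr G v), ∃ k, e v = Sum.inr ⟨fV ⟨v, h⟩, k⟩ := by
    intro v h
    refine ⟨(Finite.equivFin {x // fV x = fV ⟨v, h⟩}) ⟨⟨v, h⟩, rfl⟩, ?_⟩
    show (Equiv.sumCongr eU eC) ((Equiv.sumCompl (fun v => v < TGminNbr G v)).symm v) = _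
    rw [Equiv.sumCompl_symm_apply_of_neg (p := fun v => v < TGminNbr G v) (a := v) h]
    rfl
  have hkey : ∀ (u v : V) (hu : u < TGminNbr G u) (hv : ¬ v < TGminNbr G v),
      (G.Adj u v ↔ fV ⟨v, hv⟩ ≤ fU ⟨u, hu⟩) := by
    intro u v hu hv
    have hne' : u ≠ v := fun h => hv (h ▸ hu)
    have spec := TGfUval_spec hN hmono hne hcard u
    rw [TGadj_iff hN hmono]
    show _ ↔ a.symm _ ≤ a.symm _
    rw [a.symm.le_iff_le, Subtype.mk_le_mk]
    constructor
    · rintro ⟨h1, -⟩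
      exact spec.2.2 _ (hfVmem v hv) h1
    · intro h1
      exact ⟨h1.trans spec.2.1, hne'⟩
  refine ⟨(TGTset G).card, m, n, hpos, hm, hn, ⟨⟨e, ?_⟩⟩⟩
  intro x y
  by_cases hx : x < TGminNbr G x <;> by_cases hy : y < TGminNbr G y
  · obtain ⟨k, hk⟩ := heU x hx
    obtain ⟨l, hl⟩ := heU y hy
    rw [hk, hl]
    exact iff_of_false (fun h => h) (TGindep hN hmono hx hy)
  · obtain ⟨k, hk⟩ := heU x hx
    obtain ⟨l, hl⟩ := heC y hy
    rw [hk, hl]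
    show fV ⟨y, hy⟩ ≤ fU ⟨x, hx⟩ ↔ G.Adj x y
    exact (hkey x y hx hy).symm
  · obtain ⟨k, hk⟩ := heC x hx
    obtain ⟨l, hl⟩ := heU y hy
    rw [hk, hl]
    show fV ⟨x, hx⟩ ≤ fU ⟨y, hy⟩ ↔ G.Adj x y
    exact (hkey y x hy hx).symm.trans (G.adj_comm y x)
  · obtain ⟨k, hk⟩ := heC x hx
    obtain ⟨l, hl⟩ := heC y hy
    rw [hk, hl]
    show (⟨fV ⟨x, hx⟩, k⟩ : Σ i, Fin (n i)) ≠ ⟨fV ⟨y, hy⟩, l⟩ ↔ G.Adj x y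
    constructor
    · intro hne''
      refine TGclique hN hmono hx hy (fun hxy => hne'' ?_)
      subst hxy
      exact Sum.inr_injective (hk.symm.trans hl)
    · intro hadj h
      apply e.injective.ne_iff.mpr hadj.ne
      rw [hk, hl, h]

theorem connected_threshold_iso_nsg {V : Type*} [Fintype V] (G : SimpleGraph V)
    (hcard : 2 ≤ Fintype.card V) (hconn : G.Connected) (hG : G.IsThreshold) :
    ∃ (h : ℕ) (m n : Fin h → ℕ), 1 ≤ h ∧ (∀ i, 1 ≤ m i) ∧ (∀ i, 1 ≤ n i) ∧
      Nonempty (G ≃g NSG h m n) := by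
  classical
  obtain ⟨S, w, hw⟩ := hG
  letI : LinearOrder V := LinearOrder.lift' (fun v => toLex (w v, (Fintype.equivFin V) v))
    (fun u v h => (Fintype.equivFin V).injective (congrArg (fun p => (ofLex p).2) h))
  have hle : ∀ u v : V, u ≤ v → w u ≤ w v := by
    intro u v h
    have h' : toLex (w u, (Fintype.equivFin V) u) ≤ toLex (w v, (Fintype.equivFin V) v) := h
    rcases Prod.Lex.le_iff.mp h' with h1 | ⟨h1, -⟩
    · exact le_of_lt h1
    · exact le_of_eq h1
  have hmono : ∀ ⦃u u' v : V⦄, u ≤ u' → u' ≠ v → G.Adj u v → G.Adj u' v := by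
    intro u u' v h hne hadj
    have h1 := (hw u v hadj.ne).mp hadj
    have h2 := hle u u' h
    exact (hw u' v hne).mpr (by linarith)
  have hN : ∀ v, ∃ u, G.Adj u v := by
    intro v
    obtain ⟨u, hu⟩ := Fintype.exists_ne_of_one_lt_card hcard v
    obtain ⟨p⟩ := hconn v u
    cases p with
    | nil => exact absurd rfl hu
    | cons hadj q => exact ⟨_, hadj.symm⟩
  exact TGmain G hcard hN hmono
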